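/- arXiv:1903.03917 — 4 statements merged into one kernel-verified Lean document; each statement's English description precedes it below -/
import Mathlib

section
/- Let X and Y be random variables on a probability space (Ω, 𝓕, P) with 0 < Var(X) < ∞ and 0 < Var(Y) < ∞, and suppose there exist a, b, c, d ∈ ℝ with E(Y|X) = aX + c a.s. and E(X|Y) = bY + d a.s. Then 0 ≤ ab ≤ 1 and ab = ρ_{XY}², where ρ_{XY} = Cov(X,Y)/√(Var(X)Var(Y)) is the correlation coefficient of X and Y. -/
open MeasureTheory ProbabilityTheory Filter Topology

open scoped ENNReal NNReal

/-- Product of two L² functions is integrable. -/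
lemma memLp2_integrable_mul {Ω : Type*} [MeasurableSpace Ω] {P : Measure Ω}
    {f g : Ω → ℝ} (hf : MemLp f 2 P) (hg : MemLp g 2 P) :
    Integrable (fun ω => f ω * g ω) P := by
  refine (hf.integrable_sq.add hg.integrable_sq).mono'
    (hf.aestronglyMeasurable.mul hg.aestronglyMeasurable) ?_
  filter_upwards with ω
  simp only [Real.norm_eq_abs, abs_mul, Pi.add_apply]
  nlinarith [abs_nonneg (f ω), abs_nonneg (g ω), sq_abs (f ω), sq_abs (g ω),
    sq_nonneg (|f ω| - |g ω|)]

/-- Covariance key computation: if `E[g|σ(f)] = a f + c` a.s. then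
`Cov(f,g) = a Var f`. -/
lemma cov_eq_of_condexp_linear {Ω : Type*} [MeasurableSpace Ω] (P : Measure Ω)
    [IsProbabilityMeasure P] {f g : Ω → ℝ} (hf : Measurable f)
    (hf2 : MemLp f 2 P) (hg2 : MemLp g 2 P) {a c : ℝ}
    (h : P[g | MeasurableSpace.comap f inferInstance] =ᵐ[P] fun ω => a * f ω + c) :
    ∫ ω, f ω * g ω ∂P - (∫ ω, f ω ∂P) * ∫ ω, g ω ∂P = a * variance f P := by
  have hm : MeasurableSpace.comap f inferInstance ≤ ‹MeasurableSpace Ω› :=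
    measurable_iff_comap_le.mp hf
  have hfm : StronglyMeasurable[MeasurableSpace.comap f inferInstance] f :=
    Measurable.stronglyMeasurable (fun s hs => ⟨s, hs, rfl⟩)
  have hIf : Integrable f P := hf2.integrable one_le_two
  have hIg : Integrable g P := hg2.integrable one_le_two
  have hIfg : Integrable (f * g) P := memLp2_integrable_mul hf2 hg2
  have hIf2 : Integrable (fun ω => f ω ^ 2) P := hf2.integrable_sq
  -- pull-out property
  have hpull : P[f * g | MeasurableSpace.comap f inferInstance]
      =ᵐ[P] f * P[g | MeasurableSpace.comap f inferInstance] :=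
    condExp_mul_of_stronglyMeasurable_left hfm hIfg hIg
  have h1 : ∫ ω, f ω * g ω ∂P = ∫ ω, f ω * (a * f ω + c) ∂P := by
    have h2 : P[f * g | MeasurableSpace.comap f inferInstance]
        =ᵐ[P] fun ω => f ω * (a * f ω + c) := by
      filter_upwards [hpull, h] with ω h₁ h₂
      simp only [Pi.mul_apply] at h₁ ⊢
      rw [h₁, h₂]
    calc ∫ ω, f ω * g ω ∂P = ∫ ω, (f * g) ω ∂P := rfl
      _ = ∫ ω, (P[f * g | MeasurableSpace.comap f inferInstance]) ω ∂P :=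
          (integral_condExp (f := f * g) hm).symm
      _ = ∫ ω, f ω * (a * f ω + c) ∂P := integral_congr_ae h2
  have h3 : ∫ ω, g ω ∂P = a * (∫ ω, f ω ∂P) + c := by
    calc ∫ ω, g ω ∂P
        = ∫ ω, (P[g | MeasurableSpace.comap f inferInstance]) ω ∂P :=
          (integral_condExp (f := g) hm).symm
      _ = ∫ ω, (a * f ω + c) ∂P := integral_congr_ae h
      _ = a * (∫ ω, f ω ∂P) + c := by
          rw [integral_add (hIf.const_mul a) (integrable_const c),
            integral_const_mul, integral_const]
          simp
  have h4 : ∫ ω, f ω * (a * f ω + c) ∂P = a * ∫ ω, f ω ^ 2 ∂P + c * ∫ ω, f ω ∂P := by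
    have he : (fun ω => f ω * (a * f ω + c)) = fun ω => a * f ω ^ 2 + c * f ω := by
      funext ω; ring
    have hi1 : Integrable (fun ω => a * f ω ^ 2) P := hIf2.const_mul a
    have hi2 : Integrable (fun ω => c * f ω) P := hIf.const_mul c
    rw [he, integral_add hi1 hi2, integral_const_mul, integral_const_mul]
  have hvar : variance f P = ∫ ω, f ω ^ 2 ∂P - (∫ ω, f ω ∂P) ^ 2 := by
    simpa using variance_eq_sub hf2
  rw [h1, h4, h3, hvar]
  ring

/-- **Lemma 2.2 (i).** If `E(Y|X) = aX + c` and `E(X|Y) = bY + d` a.s., where `X, Y` have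
finite positive variance, then `0 ≤ ab ≤ 1` and `ab = ρ_{XY}²` where `ρ_{XY}` is the
correlation coefficient of `X` and `Y`. -/
theorem linearly_compatible_ab_eq_corr_sq
    {Ω : Type*} [MeasurableSpace Ω] (P : Measure Ω) [IsProbabilityMeasure P]
    (X Y : Ω → ℝ) (hX : Measurable X) (hY : Measurable Y)
    (hX2 : MemLp X 2 P) (hY2 : MemLp Y 2 P)
    (hVarX : 0 < variance X P) (hVarY : 0 < variance Y P)
    (a b c d : ℝ)
    (hYX : P[Y | MeasurableSpace.comap X inferInstance] =ᵐ[P] fun ω => a * X ω + c)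
    (hXY : P[X | MeasurableSpace.comap Y inferInstance] =ᵐ[P] fun ω => b * Y ω + d) :
    0 ≤ a * b ∧ a * b ≤ 1 ∧
      a * b = ((∫ ω, X ω * Y ω ∂P - (∫ ω, X ω ∂P) * ∫ ω, Y ω ∂P) /
        Real.sqrt (variance X P * variance Y P)) ^ 2 := by
  set EX := ∫ ω, X ω ∂P with hEX
  set EY := ∫ ω, Y ω ∂P with hEY
  set C := ∫ ω, X ω * Y ω ∂P - EX * EY with hC
  set V1 := variance X P with hV1
  set V2 := variance Y P with hV2
  have hC1 : C = a * V1 := cov_eq_of_condexp_linear P hX hX2 hY2 hYX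
  have hC2 : C = b * V2 := by
    have h := cov_eq_of_condexp_linear P hY hY2 hX2 hXY
    rw [hC, hEX, hEY, hV2, ← h]
    congr 1
    · apply integral_congr_ae; filter_upwards with ω; ring
    · ring
  -- Cauchy–Schwarz via quadratic discriminant
  have hX2' : MemLp (fun ω => X ω - EX) 2 P := hX2.sub (memLp_const EX)
  have hY2' : MemLp (fun ω => Y ω - EY) 2 P := hY2.sub (memLp_const EY)
  have hIX : Integrable X P := hX2.integrable one_le_two
  have hIY : Integrable Y P := hY2.integrable one_le_two
  have hIXY : Integrable (fun ω => X ω * Y ω) P := memLp2_integrable_mul hX2 hY2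
  have hIX2' : Integrable (fun ω => (X ω - EX) ^ 2) P := hX2'.integrable_sq
  have hIY2' : Integrable (fun ω => (Y ω - EY) ^ 2) P := hY2'.integrable_sq
  have hIB : Integrable (fun ω => (X ω - EX) * (Y ω - EY)) P :=
    memLp2_integrable_mul hX2' hY2'
  have hvarX : ∫ ω, (X ω - EX) ^ 2 ∂P = V1 := by
    rw [hV1, variance_eq_integral hX2.aestronglyMeasurable.aemeasurable]
  have hvarY : ∫ ω, (Y ω - EY) ^ 2 ∂P = V2 := by
    rw [hV2, variance_eq_integral hY2.aestronglyMeasurable.aemeasurable]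
  have hB : ∫ ω, (X ω - EX) * (Y ω - EY) ∂P = C := by
    have he : (fun ω => (X ω - EX) * (Y ω - EY))
        = fun ω => (X ω * Y ω - (EY * X ω + EX * Y ω)) + EX * EY := by
      funext ω; ring
    have hi0 : Integrable (fun ω => EY * X ω + EX * Y ω) P :=
      (hIX.const_mul EY).add (hIY.const_mul EX)
    have hi1 : Integrable (fun ω => X ω * Y ω - (EY * X ω + EX * Y ω)) P :=
      hIXY.sub hi0
    rw [he, integral_add hi1 (integrable_const _), integral_sub hIXY hi0,
      integral_add (hIX.const_mul EY) (hIY.const_mul EX),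
      integral_const_mul, integral_const_mul, integral_const]
    simp only [measure_univ, probReal_univ, ENNReal.toReal_one, smul_eq_mul, one_mul, mul_one]
    rw [hC, hEX, hEY]; ring
  have hq : ∀ t : ℝ, 0 ≤ V1 * (t * t) + (-2 * C) * t + V2 := by
    intro t
    have hnn : 0 ≤ ∫ ω, (t * (X ω - EX) - (Y ω - EY)) ^ 2 ∂P :=
      integral_nonneg fun ω => sq_nonneg _
    have hexp : ∫ ω, (t * (X ω - EX) - (Y ω - EY)) ^ 2 ∂P
        = V1 * (t * t) + (-2 * C) * t + V2 := by
      have he : (fun ω => (t * (X ω - EX) - (Y ω - EY)) ^ 2)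
          = fun ω => ((t * t) * (X ω - EX) ^ 2
              - (2 * t) * ((X ω - EX) * (Y ω - EY))) + (Y ω - EY) ^ 2 := by
        funext ω; ring
      have hi1 : Integrable (fun ω => (t * t) * (X ω - EX) ^ 2) P :=
        hIX2'.const_mul _
      have hi2 : Integrable (fun ω => (2 * t) * ((X ω - EX) * (Y ω - EY))) P :=
        hIB.const_mul _
      have hi3 : Integrable (fun ω => (t * t) * (X ω - EX) ^ 2
          - (2 * t) * ((X ω - EX) * (Y ω - EY))) P := hi1.sub hi2
      rw [he, integral_add hi3 hIY2', integral_sub hi1 hi2,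
        integral_const_mul, integral_const_mul, hvarX, hvarY, hB]
      ring
    rw [← hexp]; exact hnn
  have hdis : discrim V1 (-2 * C) V2 ≤ 0 := discrim_le_zero hq
  have hCS : C ^ 2 ≤ V1 * V2 := by
    rw [discrim] at hdis; nlinarith [hdis]
  have hVV : (0 : ℝ) < V1 * V2 := mul_pos hVarX hVarY
  have hab : a * b = C ^ 2 / (V1 * V2) := by
    rw [eq_div_iff hVV.ne']
    calc a * b * (V1 * V2) = (a * V1) * (b * V2) := by ring
      _ = C * C := by rw [← hC1, ← hC2]
      _ = C ^ 2 := (sq C).symm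
  have hsq : (C / Real.sqrt (V1 * V2)) ^ 2 = C ^ 2 / (V1 * V2) := by
    rw [div_pow, Real.sq_sqrt hVV.le]
  refine ⟨?_, ?_, ?_⟩
  · rw [hab]; positivity
  · rw [hab]; exact (div_le_one hVV).mpr hCS
  · rw [hab, hsq]
end

section
/- Let X and Y be random variables on a probability space (Ω, 𝓕, P) with 0 < Var(X) < ∞ and 0 < Var(Y) < ∞, and suppose there exist a, b, c, d ∈ ℝ with E(Y|X) = aX + c a.s. and E(X|Y) = bY + d a.s. If ab = 1, then Y = aX + c almost surely. -/
open MeasureTheory ProbabilityTheory Filter Topology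

open scoped ENNReal NNReal

/-- **Lemma 2.2 (ii).** If `E(Y|X) = aX + c` and `E(X|Y) = bY + d` a.s., where `X, Y` have
finite positive variance, and `ab = 1`, then `Y = aX + c` almost surely. -/
theorem linearly_compatible_ab_eq_one
    {Ω : Type*} [MeasurableSpace Ω] (P : Measure Ω) [IsProbabilityMeasure P]
    (X Y : Ω → ℝ) (hX : Measurable X) (hY : Measurable Y)
    (hX2 : MemLp X 2 P) (hY2 : MemLp Y 2 P)
    (hVarX : 0 < variance X P) (hVarY : 0 < variance Y P)
    (a b c d : ℝ)
    (hYX : P[Y | MeasurableSpace.comap X inferInstance] =ᵐ[P] fun ω => a * X ω + c)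
    (hXY : P[X | MeasurableSpace.comap Y inferInstance] =ᵐ[P] fun ω => b * Y ω + d)
    (hab : a * b = 1) :
    Y =ᵐ[P] fun ω => a * X ω + c := by
  have hm₁ : MeasurableSpace.comap X inferInstance ≤ _ := hX.comap_le
  have hm₂ : MeasurableSpace.comap Y inferInstance ≤ _ := hY.comap_le
  -- basic integrability
  have hXi : Integrable X P := hX2.integrable one_le_two
  have hYi : Integrable Y P := hY2.integrable one_le_two
  have hX2i : Integrable (fun ω => X ω ^ 2) P := hX2.integrable_sq
  have hY2i : Integrable (fun ω => Y ω ^ 2) P := hY2.integrable_sq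
  have hXYi : Integrable (fun ω => X ω * Y ω) P := by
    have h : (fun ω => X ω * Y ω)
        = fun ω => (((X ω + Y ω) ^ 2 - X ω ^ 2) - Y ω ^ 2) * (1 / 2) :=
      funext fun ω => by ring
    rw [h]
    exact (((hX2.add hY2).integrable_sq.sub hX2.integrable_sq).sub
      hY2.integrable_sq).mul_const _
  -- X is strongly measurable w.r.t. comap X, Y w.r.t. comap Y
  have hXm : StronglyMeasurable[MeasurableSpace.comap X inferInstance] X :=
    (Measurable.stronglyMeasurable (fun s hs => ⟨s, hs, rfl⟩))
  have hYm : StronglyMeasurable[MeasurableSpace.comap Y inferInstance] Y :=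
    (Measurable.stronglyMeasurable (fun s hs => ⟨s, hs, rfl⟩))
  -- notation for moments
  set x := ∫ ω, X ω ∂P with hx
  set y := ∫ ω, Y ω ∂P with hy
  set x2 := ∫ ω, X ω ^ 2 ∂P with hx2
  set y2 := ∫ ω, Y ω ^ 2 ∂P with hy2
  set s := ∫ ω, X ω * Y ω ∂P with hs
  -- E Y = a E X + c
  have e3 : y = a * x + c := by
    have h1 : ∫ ω, (P[Y|MeasurableSpace.comap X inferInstance]) ω ∂P = y :=
      integral_condExp hm₁
    have h2 : ∫ ω, (P[Y|MeasurableSpace.comap X inferInstance]) ω ∂P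
        = ∫ ω, (a * X ω + c) ∂P := integral_congr_ae hYX
    rw [h1] at h2
    rw [h2, integral_add (hXi.const_mul a) (integrable_const c),
      integral_const_mul, integral_const]
    simp [hx]
  have e4 : x = b * y + d := by
    have h1 : ∫ ω, (P[X|MeasurableSpace.comap Y inferInstance]) ω ∂P = x :=
      integral_condExp hm₂
    have h2 : ∫ ω, (P[X|MeasurableSpace.comap Y inferInstance]) ω ∂P
        = ∫ ω, (b * Y ω + d) ∂P := integral_congr_ae hXY
    rw [h1] at h2
    rw [h2, integral_add (hYi.const_mul b) (integrable_const d),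
      integral_const_mul, integral_const]
    simp [hy]
  -- E[XY] = a E[X²] + c E[X]
  have e1 : s = a * x2 + c * x := by
    have hpull : P[X * Y|MeasurableSpace.comap X inferInstance]
        =ᵐ[P] X * P[Y|MeasurableSpace.comap X inferInstance] :=
      condExp_mul_of_stronglyMeasurable_left hXm hXYi hYi
    have h1 : ∫ ω, (P[X * Y|MeasurableSpace.comap X inferInstance]) ω ∂P = s :=
      integral_condExp hm₁
    have h2 : ∫ ω, (P[X * Y|MeasurableSpace.comap X inferInstance]) ω ∂P
        = ∫ ω, X ω * (a * X ω + c) ∂P := by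
      refine integral_congr_ae (hpull.trans ?_)
      filter_upwards [hYX] with ω hω
      simp only [Pi.mul_apply, hω]
    rw [h1] at h2
    have h3 : (fun ω => X ω * (a * X ω + c))
        = fun ω => a * X ω ^ 2 + c * X ω := funext fun ω => by ring
    rw [h2, h3, integral_add (hX2i.const_mul a) (hXi.const_mul c),
      integral_const_mul, integral_const_mul]
  -- E[XY] = b E[Y²] + d E[Y]
  have e2 : s = b * y2 + d * y := by
    have hYXi : Integrable (Y * X) P := by
      have h : (Y * X) = fun ω => X ω * Y ω := funext fun ω => by
        simp [mul_comm]
      rw [h]; exact hXYi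
    have hpull : P[Y * X|MeasurableSpace.comap Y inferInstance]
        =ᵐ[P] Y * P[X|MeasurableSpace.comap Y inferInstance] :=
      condExp_mul_of_stronglyMeasurable_left hYm hYXi hXi
    have h1 : ∫ ω, (P[Y * X|MeasurableSpace.comap Y inferInstance]) ω ∂P = s := by
      rw [integral_condExp hm₂]
      exact integral_congr_ae (ae_of_all _ fun ω => by simp [mul_comm])
    have h2 : ∫ ω, (P[Y * X|MeasurableSpace.comap Y inferInstance]) ω ∂P
        = ∫ ω, Y ω * (b * Y ω + d) ∂P := by
      refine integral_congr_ae (hpull.trans ?_)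
      filter_upwards [hXY] with ω hω
      simp only [Pi.mul_apply, hω]
    rw [h1] at h2
    have h3 : (fun ω => Y ω * (b * Y ω + d))
        = fun ω => b * Y ω ^ 2 + d * Y ω := funext fun ω => by ring
    rw [h2, h3, integral_add (hY2i.const_mul b) (hYi.const_mul d),
      integral_const_mul, integral_const_mul]
  -- variances
  have e5 : variance X P = x2 - x ^ 2 := variance_eq_sub hX2
  have e6 : variance Y P = y2 - y ^ 2 := variance_eq_sub hY2
  -- the key algebraic identity : E[(Y - aX - c)²] = 0
  have key : y2 - 2 * a * s - 2 * c * y + a ^ 2 * x2 + 2 * a * c * x + c ^ 2 = 0 := by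
    have hcov1 : s - x * y = a * variance X P := by
      rw [e5]; linear_combination e1 - x * e3
    have hcov2 : s - x * y = b * variance Y P := by
      rw [e6]; linear_combination e2 - y * e4
    have hcov : a * variance X P = b * variance Y P := hcov1.symm.trans hcov2
    have hvv : variance Y P = a ^ 2 * variance X P := by
      linear_combination (-a) * hcov + (-(variance Y P)) * hab
    linear_combination (-1 : ℝ) * e6 + hvv + (-(a ^ 2)) * e5
      + (-(2 * a)) * hcov1 + (y - a * x - c) * e3
  -- integrability of the square of Z = Y - aX - c
  set Z : Ω → ℝ := fun ω => Y ω - (a * X ω + c) with hZ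
  have hZ2 : MemLp Z 2 P := hY2.sub ((hX2.const_mul a).add (memLp_const c))
  have hZ2i : Integrable (fun ω => Z ω ^ 2) P := hZ2.integrable_sq
  have hint0 : ∫ ω, Z ω ^ 2 ∂P = 0 := by
    have h : (fun ω => Z ω ^ 2)
        = fun ω => (Y ω ^ 2 + (-(2 * a)) * (X ω * Y ω)) + ((-(2 * c)) * Y ω
          + (a ^ 2 * X ω ^ 2 + ((2 * a * c) * X ω + c ^ 2))) :=
      funext fun ω => by simp only [hZ]; ring
    have i5 : Integrable (fun ω => (2 * a * c) * X ω + c ^ 2) P :=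
      (hXi.const_mul (2 * a * c)).add (integrable_const (c ^ 2))
    have i4 : Integrable (fun ω => a ^ 2 * X ω ^ 2 + ((2 * a * c) * X ω + c ^ 2)) P :=
      (hX2i.const_mul (a ^ 2)).add i5
    have i3 : Integrable (fun ω => (-(2 * c)) * Y ω
        + (a ^ 2 * X ω ^ 2 + ((2 * a * c) * X ω + c ^ 2))) P :=
      (hYi.const_mul (-(2 * c))).add i4
    have i2 : Integrable (fun ω => Y ω ^ 2 + (-(2 * a)) * (X ω * Y ω)) P :=
      hY2i.add (hXYi.const_mul (-(2 * a)))
    rw [h, integral_add i2 i3,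
      integral_add hY2i (hXYi.const_mul (-(2 * a))),
      integral_add (hYi.const_mul (-(2 * c))) i4,
      integral_add (hX2i.const_mul (a ^ 2)) i5,
      integral_add (hXi.const_mul (2 * a * c)) (integrable_const (c ^ 2)),
      integral_const_mul, integral_const_mul, integral_const_mul, integral_const_mul,
      integral_const]
    simp only [probReal_univ, smul_eq_mul, one_mul]
    linarith [key]
  have hZ0 : (fun ω => Z ω ^ 2) =ᵐ[P] 0 := by
    refine (integral_eq_zero_iff_of_nonneg_ae ?_ hZ2i).mp hint0
    exact ae_of_all _ fun ω => sq_nonneg _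
  filter_upwards [hZ0] with ω hω
  have h2 : Z ω ^ 2 = 0 := hω
  have h3 : Z ω = 0 := by
    have := sq_eq_zero_iff.mp h2
    simpa using this
  simpa [hZ, sub_eq_zero] using h3
end

section
/- Let X and Y be random variables on a probability space (Ω, 𝓕, P) with 0 < Var(X) < ∞ and 0 < Var(Y) < ∞, and suppose there exist a, b, c, d ∈ ℝ with E(Y|X) = aX + c a.s. and E(X|Y) = bY + d a.s. If ab < 1, then E[X | σ(X)̄ ∩ σ(Y)̄] = E(X) a.s. and E[Y | σ(X)̄ ∩ σ(Y)̄] = E(Y) a.s., where σ(X)̄ (resp. σ(Y)̄) denotes the σ-field generated by σ(X) (resp. σ(Y)) together with the P-null sets of 𝓕. -/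
open MeasureTheory ProbabilityTheory Filter Topology

open scoped ENNReal NNReal

/-- The σ-field generated by a sub-σ-field `G` together with the `P`-null sets of the
ambient σ-field. -/
def withNullSets {Ω : Type*} {m : MeasurableSpace Ω} (P : Measure Ω)
    (G : MeasurableSpace Ω) : MeasurableSpace Ω :=
  G ⊔ MeasurableSpace.generateFrom {s : Set Ω | MeasurableSet[m] s ∧ P s = 0}

section Wrappers

variable {Ω : Type*} {m : MeasurableSpace Ω} {P : Measure Ω} {f g : Ω → ℝ} {s t : Set Ω}

lemma mySetIntegral_congr_set (hst : s =ᵐ[P] t) :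
    ∫ x in s, f x ∂P = ∫ x in t, f x ∂P := setIntegral_congr_set hst

lemma myIntegrableOn (hf : Integrable f P) : IntegrableOn f s P := hf.integrableOn

lemma myMemLpIntegrable [IsFiniteMeasure P] (hf : MemLp f 2 P) : Integrable f P :=
  hf.integrable one_le_two

lemma integrable_mul_of_memL2 (hf : MemLp f 2 P) (hg : MemLp g 2 P) :
    Integrable (fun ω => f ω * g ω) P := by
  have h2 : (1 : ℝ≥0∞) / 1 = 1 / 2 + 1 / 2 := by
    rw [ENNReal.div_add_div_same]
    norm_num
    rw [ENNReal.div_self (by norm_num) ENNReal.ofNat_ne_top]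
  have h := hg.smul (𝕜 := ℝ) (r := 1) hf
  rw [memLp_one_iff_integrable] at h
  exact h

lemma myIntegralCongr (h : f =ᵐ[P] g) : ∫ x, f x ∂P = ∫ x, g x ∂P := integral_congr_ae h

lemma mySetIntegralCongr (h : f =ᵐ[P] g) : ∫ x in s, f x ∂P = ∫ x in s, g x ∂P :=
  integral_congr_ae (ae_restrict_of_ae h)

end Wrappers

section Aux

variable {Ω : Type*} {m : MeasurableSpace Ω} {P : Measure Ω}

lemma withNullSets_le {G : MeasurableSpace Ω} (hG : G ≤ m) : withNullSets P G ≤ m :=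
  sup_le hG (MeasurableSpace.generateFrom_le fun _ hs => hs.1)

lemma exists_ae_eq_of_withNullSets {G : MeasurableSpace Ω} {s : Set Ω}
    (hs : MeasurableSet[withNullSets P G] s) :
    ∃ t, MeasurableSet[G] t ∧ s =ᵐ[P] t := by
  have hle : withNullSets P G ≤ @eventuallyMeasurableSpace Ω G (ae P) _ := by
    refine sup_le (fun u hu => ⟨u, hu, EventuallyEq.rfl⟩)
      (MeasurableSpace.generateFrom_le ?_)
    rintro u ⟨-, hu0⟩
    exact ⟨∅, MeasurableSet.empty, by rwa [ae_eq_empty]⟩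
  exact hle s hs

lemma condexp_withNullSets [IsFiniteMeasure P] {G : MeasurableSpace Ω} (hG : G ≤ m) {f : Ω → ℝ}
    (hf : Integrable f P) :
    P[f | withNullSets P G] =ᵐ[P] P[f | G] := by
  have hle : withNullSets P G ≤ m := withNullSets_le hG
  refine (ae_eq_condExp_of_forall_setIntegral_eq hle hf
    (fun s _ _ => myIntegrableOn integrable_condExp) ?_ ?_).symm
  · intro s hs _
    obtain ⟨t, ht, hst⟩ := exists_ae_eq_of_withNullSets hs
    rw [mySetIntegral_congr_set hst, mySetIntegral_congr_set hst,
      setIntegral_condExp hG hf ht]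
  · exact AEStronglyMeasurable.mono le_sup_left
      (StronglyMeasurable.aestronglyMeasurable stronglyMeasurable_condExp)

lemma memℒp_two_condexp [IsFiniteMeasure P] {G : MeasurableSpace Ω} (hG : G ≤ m) {f : Ω → ℝ}
    (hf : MemLp f 2 P) : MemLp (P[f|G]) 2 P := by
  set g : Ω → ℝ := ((condExpL2 ℝ ℝ hG (hf.toLp f) : Lp ℝ 2 P) : Ω → ℝ) with hgdef
  have hg2 : MemLp g 2 P := Lp.memLp _
  have hmeas : AEStronglyMeasurable[G] g P := lpMeas.aestronglyMeasurable _
  have heq : g =ᵐ[P] P[f|G] := by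
    refine ae_eq_condExp_of_forall_setIntegral_eq hG (myMemLpIntegrable hf)
      (fun s _ _ => myIntegrableOn (myMemLpIntegrable hg2)) ?_ hmeas
    intro s hs hμs
    have h1 : ∫ x in s, g x ∂P = ∫ x in s, (hf.toLp f) x ∂P :=
      integral_condExpL2_eq hG (hf.toLp f) hs hμs.ne
    rw [h1]
    exact mySetIntegralCongr hf.coeFn_toLp
  exact hg2.ae_eq heq

end Aux

section Key

variable {Ω : Type*} {m : MeasurableSpace Ω}

lemma key_condexp (P : Measure Ω) [IsProbabilityMeasure P]
    {m₁ m₂ : MeasurableSpace Ω} (h₁ : m₁ ≤ m) (h₂ : m₂ ≤ m)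
    {f g : Ω → ℝ} (hf : MemLp f 2 P) (hg : MemLp g 2 P)
    {a b c d : ℝ}
    (hfg : P[g | m₁] =ᵐ[P] fun ω => a * f ω + c)
    (hgf : P[f | m₂] =ᵐ[P] fun ω => b * g ω + d)
    (hab : a * b < 1) :
    P[f | m₁ ⊓ m₂] =ᵐ[P] fun _ => ∫ ω, f ω ∂P := by
  have hG : m₁ ⊓ m₂ ≤ m := le_trans inf_le_left h₁
  have hfi : Integrable f P := myMemLpIntegrable hf
  have hgi : Integrable g P := myMemLpIntegrable hg
  set Z : Ω → ℝ := P[f | m₁ ⊓ m₂] with hZdef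
  set F : ℝ := ∫ ω, f ω ∂P with hFdef
  set EG : ℝ := ∫ ω, g ω ∂P with hEGdef
  have hZ2 : MemLp Z 2 P := memℒp_two_condexp hG hf
  have hZm : StronglyMeasurable[m₁ ⊓ m₂] Z := stronglyMeasurable_condExp
  have hZi : Integrable Z P := integrable_condExp
  have hZint : ∫ ω, Z ω ∂P = F := by rw [hZdef, hFdef]; exact integral_condExp hG
  have hZf_int : Integrable (fun ω => Z ω * f ω) P := integrable_mul_of_memL2 hZ2 hf
  have hZg_int : Integrable (fun ω => Z ω * g ω) P := integrable_mul_of_memL2 hZ2 hg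
  have hZZ_int : Integrable (fun ω => Z ω * Z ω) P := integrable_mul_of_memL2 hZ2 hZ2
  set u : ℝ := ∫ ω, Z ω * f ω ∂P with hudef
  set v : ℝ := ∫ ω, Z ω * g ω ∂P with hvdef
  -- scalar identities
  have hEg : EG = a * F + c := by
    have h1 : ∫ ω, (P[g | m₁]) ω ∂P = EG := integral_condExp h₁
    have h2 : ∫ ω, (P[g | m₁]) ω ∂P = ∫ ω, (a * f ω + c) ∂P := myIntegralCongr hfg
    have h3 : ∫ ω, (a * f ω + c) ∂P = a * F + c := by
      rw [integral_add (hfi.const_mul a) (integrable_const c), integral_const_mul,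
        integral_const, probReal_univ]
      simp [hFdef]
    rw [← h1, h2, h3]
  have hEf : F = b * EG + d := by
    have h1 : ∫ ω, (P[f | m₂]) ω ∂P = F := integral_condExp h₂
    have h2 : ∫ ω, (P[f | m₂]) ω ∂P = ∫ ω, (b * g ω + d) ∂P := myIntegralCongr hgf
    have h3 : ∫ ω, (b * g ω + d) ∂P = b * EG + d := by
      rw [integral_add (hgi.const_mul b) (integrable_const d), integral_const_mul,
        integral_const, probReal_univ]
      simp [hEGdef]
    rw [← h1, h2, h3]
  have step : ∀ (m' : MeasurableSpace Ω) (hm' : m' ≤ m), m₁ ⊓ m₂ ≤ m' →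
      ∀ (h h' : Ω → ℝ), Integrable h P → Integrable (fun ω => Z ω * h ω) P →
      Integrable (fun ω => Z ω * h' ω) P →
      ∀ (β δ : ℝ), (P[h | m'] =ᵐ[P] fun ω => β * h' ω + δ) →
      ∫ ω, Z ω * h ω ∂P = β * ∫ ω, Z ω * h' ω ∂P + δ * F := by
    intro m' hm' hGm' h h' hhi hZh hZh' β δ hcond
    have hZm' : StronglyMeasurable[m'] Z := hZm.mono hGm'
    have e1 : ∫ ω, Z ω * h ω ∂P = ∫ ω, (P[fun ω => Z ω * h ω | m']) ω ∂P :=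
      (integral_condExp hm').symm
    have e2 : P[fun ω => Z ω * h ω | m'] =ᵐ[P] fun ω => Z ω * (P[h | m']) ω := by
      have h5 := condExp_mul_of_stronglyMeasurable_left hZm' hZh hhi
      filter_upwards [h5] with ω hω
      exact hω
    have e3 : (fun ω => Z ω * (P[h | m']) ω) =ᵐ[P] fun ω => β * (Z ω * h' ω) + δ * Z ω := by
      filter_upwards [hcond] with ω hω
      rw [hω]; ring
    have e4 : ∫ ω, (β * (Z ω * h' ω) + δ * Z ω) ∂P
        = β * ∫ ω, Z ω * h' ω ∂P + δ * F := by
      rw [integral_add (hZh'.const_mul β) (hZi.const_mul δ), integral_const_mul,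
        integral_const_mul, hZint]
    rw [e1, myIntegralCongr (e2.trans e3), e4]
  have equ : u = b * v + d * F :=
    step m₂ h₂ inf_le_right f g hfi hZf_int hZg_int b d hgf
  have eqv : v = a * u + c * F :=
    step m₁ h₁ inf_le_left g f hgi hZg_int hZf_int a c hfg
  -- pull-out at level m₁ ⊓ m₂ : u = ∫ Z²
  have equZ : u = ∫ ω, Z ω * Z ω ∂P := by
    have e1 : ∫ ω, Z ω * f ω ∂P = ∫ ω, (P[fun ω => Z ω * f ω | m₁ ⊓ m₂]) ω ∂P :=
      (integral_condExp hG).symm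
    have e2 : P[fun ω => Z ω * f ω | m₁ ⊓ m₂] =ᵐ[P] fun ω => Z ω * Z ω := by
      have h5 := condExp_mul_of_stronglyMeasurable_left hZm hZf_int hfi
      filter_upwards [h5] with ω hω
      exact hω
    rw [hudef, e1, myIntegralCongr e2]
  -- algebra: u = F ^ 2
  have e1 : u = a * b * u + b * c * F + d * F := by linear_combination equ + b * eqv
  have e2 : F = a * b * F + b * c + d := by linear_combination hEf + b * hEg
  have hz : (1 - a * b) * (u - F ^ 2) = 0 := by linear_combination e1 - F * e2
  have hune : u = F ^ 2 := by
    rcases mul_eq_zero.mp hz with h | h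
    · linarith
    · linarith
  -- conclude: ∫ (Z - F)² = 0
  have hiA : Integrable (fun ω => Z ω * Z ω - 2 * F * Z ω) P :=
    hZZ_int.sub (hZi.const_mul (2 * F))
  have hq_int : Integrable (fun ω => (Z ω - F) ^ 2) P :=
    (hiA.add (integrable_const (F ^ 2))).congr
      (Eventually.of_forall fun ω => by simp; ring)
  have hq0 : ∫ ω, (Z ω - F) ^ 2 ∂P = 0 := by
    have e : ∫ ω, (Z ω - F) ^ 2 ∂P
        = ∫ ω, (Z ω * Z ω - 2 * F * Z ω + F ^ 2) ∂P :=
      myIntegralCongr (Eventually.of_forall fun ω => by ring)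
    rw [e, integral_add hiA (integrable_const _),
      integral_sub hZZ_int (hZi.const_mul (2 * F)), integral_const_mul, hZint, ← equZ, hune,
      integral_const, probReal_univ]
    simp only [ENNReal.toReal_one, one_smul, smul_eq_mul]
    ring
  have hq_ae : (fun ω => (Z ω - F) ^ 2) =ᵐ[P] 0 :=
    (integral_eq_zero_iff_of_nonneg (fun ω => sq_nonneg _) hq_int).mp hq0
  filter_upwards [hq_ae] with ω hω
  have h6 : (Z ω - F) ^ 2 = 0 := hω
  have h7 := pow_eq_zero_iff (n := 2) (by norm_num) |>.mp h6
  simpa [sub_eq_zero] using h7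

end Key

/-- **Lemma 2.2 (iii).** If `E(Y|X) = aX + c` and `E(X|Y) = bY + d` a.s., where `X, Y`
have finite positive variance, and `ab < 1`, then
`E[X | σ(X)̄ ∩ σ(Y)̄] = E(X)` and `E[Y | σ(X)̄ ∩ σ(Y)̄] = E(Y)` a.s. -/
theorem linearly_compatible_ab_lt_one
    {Ω : Type*} [MeasurableSpace Ω] (P : Measure Ω) [IsProbabilityMeasure P]
    (X Y : Ω → ℝ) (hX : Measurable X) (hY : Measurable Y)
    (hX2 : MemLp X 2 P) (hY2 : MemLp Y 2 P)
    (hVarX : 0 < variance X P) (hVarY : 0 < variance Y P)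
    (a b c d : ℝ)
    (hYX : P[Y | MeasurableSpace.comap X inferInstance] =ᵐ[P] fun ω => a * X ω + c)
    (hXY : P[X | MeasurableSpace.comap Y inferInstance] =ᵐ[P] fun ω => b * Y ω + d)
    (hab : a * b < 1) :
    (P[X | withNullSets P (MeasurableSpace.comap X inferInstance) ⊓
        withNullSets P (MeasurableSpace.comap Y inferInstance)] =ᵐ[P]
      fun _ => ∫ ω, X ω ∂P) ∧
    (P[Y | withNullSets P (MeasurableSpace.comap X inferInstance) ⊓
        withNullSets P (MeasurableSpace.comap Y inferInstance)] =ᵐ[P]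
      fun _ => ∫ ω, Y ω ∂P) := by
  have hmX : MeasurableSpace.comap X inferInstance ≤ ‹MeasurableSpace Ω› := hX.comap_le
  have hmY : MeasurableSpace.comap Y inferInstance ≤ ‹MeasurableSpace Ω› := hY.comap_le
  have hle₁ := withNullSets_le (P := P) hmX
  have hle₂ := withNullSets_le (P := P) hmY
  have hfg' : P[Y | withNullSets P (MeasurableSpace.comap X inferInstance)] =ᵐ[P]
      fun ω => a * X ω + c :=
    (condexp_withNullSets hmX (myMemLpIntegrable hY2)).trans hYX
  have hgf' : P[X | withNullSets P (MeasurableSpace.comap Y inferInstance)] =ᵐ[P]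
      fun ω => b * Y ω + d :=
    (condexp_withNullSets hmY (myMemLpIntegrable hX2)).trans hXY
  constructor
  · exact key_condexp P hle₁ hle₂ hX2 hY2 hfg' hgf' hab
  · have h2 := key_condexp P hle₂ hle₁ hY2 hX2 hgf' hfg' (by rwa [mul_comm])
    rwa [inf_comm] at h2
end

section
/- Let (Ω, 𝓕, P) be a probability space and let H be a closed linear subspace of L²(Ω, 𝓕, P) such that E(h) = 0 for every h ∈ H and H is a linearly compatible family. Then for every closed linear subspace G ⊆ H that admits a countable orthonormal basis, there exists a sub-σ-field 𝓖 of 𝓕 such that E(h | 𝓖) = P_G h for all h ∈ H, where P_G denotes the orthogonal projection of L²(Ω, 𝓕, P) onto G. -/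
open MeasureTheory ProbabilityTheory Filter Topology

open scoped ENNReal NNReal

private lemma Lp_coeFn_sum_range {Ω : Type*} [MeasurableSpace Ω] {P : Measure Ω}
    (f : ℕ → Lp ℝ 2 P) (n : ℕ) :
    ⇑(∑ i ∈ Finset.range n, f i) =ᵐ[P] fun ω => ∑ i ∈ Finset.range n, f i ω := by
  induction n with
  | zero =>
    filter_upwards [Lp.coeFn_zero (E := ℝ) (p := 2) (μ := P)] with ω hω
    simpa using hω
  | succ n ih =>
    rw [Finset.sum_range_succ]
    filter_upwards [Lp.coeFn_add (∑ i ∈ Finset.range n, f i) (f n), ih] with ω h1 h2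
    rw [Finset.sum_range_succ, ← h2]
    exact h1


/-- **Lemma 2.7.** Let `H` be a closed linear subspace of `L²(Ω, 𝓕, P)` consisting of
centered random variables which is a linearly compatible family. Then for every closed
linear subspace `G ⊆ H` with a countable orthonormal basis there is a sub-σ-field `𝓖`
of `𝓕` such that `E(h | 𝓖) = P_G h` for all `h ∈ H` (where `P_G h` is characterized as
the element `q ∈ G` with `h - q ⊥ G`). -/
theorem condexp_eq_orthogonal_projection_of_linearly_compatible
    {Ω : Type*} [m : MeasurableSpace Ω] (P : Measure Ω) [IsProbabilityMeasure P]
    (H : Submodule ℝ (Lp ℝ 2 P)) (hHclosed : IsClosed (H : Set (Lp ℝ 2 P)))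
    (hmean : ∀ h ∈ H, ∫ ω, (h : Lp ℝ 2 P) ω ∂P = 0)
    (hcompat : ∀ h₀ ∈ H, ∀ (n : ℕ) (v : Fin n → Lp ℝ 2 P), (∀ i, v i ∈ H) →
      ∃ (a₀ : ℝ) (a : Fin n → ℝ),
        P[(h₀ : Ω → ℝ) | ⨆ i, MeasurableSpace.comap (v i) inferInstance] =ᵐ[P]
          fun ω => a₀ + ∑ i, a i * v i ω)
    (G : Submodule ℝ (Lp ℝ 2 P)) (hGH : G ≤ H)
    (g : ℕ → Lp ℝ 2 P) (hg : Orthonormal ℝ g)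
    (hspan : G = (Submodule.span ℝ (Set.range g)).topologicalClosure) :
    ∃ 𝓖 : MeasurableSpace Ω, 𝓖 ≤ m ∧
      ∀ h ∈ H, ∃ q ∈ G, (∀ g' ∈ G, inner (𝕜 := ℝ) (h - q) g' = (0 : ℝ)) ∧
        P[(h : Ω → ℝ) | 𝓖] =ᵐ[P] (q : Ω → ℝ) := by
  classical
  have hgm : ∀ i, Measurable (g i) := fun i => (Lp.stronglyMeasurable (g i)).measurable
  set 𝔾 : ℕ → MeasurableSpace Ω :=
    fun n => ⨆ i : Fin n, MeasurableSpace.comap (g i) inferInstance with h𝔾def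
  have h𝔾le : ∀ n, 𝔾 n ≤ m := fun n => iSup_le fun i => (hgm i).comap_le
  have h𝔾mono : Monotone 𝔾 := by
    intro a b hab
    refine iSup_le fun i => le_iSup_of_le (Fin.castLE hab i) ?_
    simp [Fin.coe_castLE]
  let ℱ : Filtration ℕ m := ⟨𝔾, h𝔾mono, h𝔾le⟩
  have int2 : ∀ f : Lp ℝ 2 P, Integrable f P := fun f =>
    (Lp.memLp f).integrable one_le_two
  have hgG : ∀ i, g i ∈ G := by
    intro i
    have : g i ∈ (Submodule.span ℝ (Set.range g)).topologicalClosure :=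
      Submodule.le_topologicalClosure _ (Submodule.subset_span ⟨i, rfl⟩)
    rwa [← hspan] at this
  have hgH : ∀ i, g i ∈ H := fun i => hGH (hgG i)
  have hgmean : ∀ i, ∫ ω, g i ω ∂P = 0 := fun i => hmean _ (hgH i)
  have hGclosed : IsClosed (G : Set (Lp ℝ 2 P)) := by
    rw [hspan]; exact Submodule.isClosed_topologicalClosure _
  refine ⟨⨆ n, ℱ n, iSup_le fun n => h𝔾le n, fun h hH => ?_⟩
  set b : ℕ → ℝ := fun i => inner ℝ (g i) h with hbdef
  -- the key computation on finite levels
  have key : ∀ n, P[(h : Ω → ℝ) | ℱ n] =ᵐ[P] fun ω => ∑ i ∈ Finset.range n, b i * g i ω := by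
    intro n
    obtain ⟨a₀, a, ha⟩ := hcompat h hH n (fun i => g i) (fun i => hgH i)
    have ha' : P[(h : Ω → ℝ) | ℱ n] =ᵐ[P] fun ω => a₀ + ∑ i : Fin n, a i * g i ω := ha
    have hintg : ∀ i : Fin n, Integrable (fun ω => a i * g (i : ℕ) ω) P := fun i =>
      (int2 (g i)).const_mul _
    have hsumint : Integrable (fun ω => ∑ i : Fin n, a i * g (i : ℕ) ω) P :=
      integrable_finset_sum _ fun i _ => hintg i
    have hintsum : ∫ ω, (∑ i : Fin n, a i * g (i : ℕ) ω) ∂P = 0 := by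
      rw [integral_finset_sum _ fun i _ => hintg i]
      refine Finset.sum_eq_zero fun i _ => ?_
      rw [integral_const_mul, hgmean, mul_zero]
    have ha₀ : a₀ = 0 := by
      have h1 : ∫ ω, (P[(h : Ω → ℝ) | ℱ n]) ω ∂P = 0 := by
        rw [integral_condExp (h𝔾le n)]; exact hmean h hH
      have h2 : ∫ ω, (a₀ + ∑ i : Fin n, a i * g (i : ℕ) ω) ∂P = a₀ := by
        rw [integral_add (integrable_const _) hsumint, hintsum, integral_const]
        simp
      rw [integral_congr_ae ha'] at h1
      rw [h1] at h2
      exact h2.symm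
    -- product integrability
    have hmul : ∀ j i : ℕ, Integrable (fun ω => g j ω * g i ω) P := by
      intro j i
      have := L2.integrable_inner (𝕜 := ℝ) (g j) (g i)
      simpa [RCLike.inner_apply, conj_trivial, mul_comm] using this
    have hmulh : ∀ j : ℕ, Integrable (fun ω => g j ω * h ω) P := by
      intro j
      have := L2.integrable_inner (𝕜 := ℝ) (g j) h
      simpa [RCLike.inner_apply, conj_trivial, mul_comm] using this
    have hinner_fun : ∀ (f₁ f₂ : Lp ℝ 2 P),
        (inner ℝ f₁ f₂ : ℝ) = ∫ ω, f₁ ω * f₂ ω ∂P := by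
      intro f₁ f₂
      rw [L2.inner_def]
      congr 1
      funext ω; simp [RCLike.inner_apply, conj_trivial, mul_comm]
    have haj : ∀ j : Fin n, a j = b j := by
      intro j
      -- g j is strongly measurable wrt ℱ n
      have hjmeas : StronglyMeasurable[ℱ n] (g (j : ℕ)) := by
        refine Measurable.stronglyMeasurable ?_
        refine Measurable.mono ?_ (le_iSup (fun i : Fin n =>
          MeasurableSpace.comap (g (i : ℕ)) inferInstance) j) le_rfl
        exact Measurable.of_comap_le le_rfl
      have hpull : P[(fun ω => g (j : ℕ) ω * h ω) | ℱ n] =ᵐ[P]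
          fun ω => g (j : ℕ) ω * (P[(h : Ω → ℝ) | ℱ n]) ω := by
        have := condExp_mul_of_stronglyMeasurable_left (μ := P) (m := ℱ n) hjmeas
          (by exact hmulh (j : ℕ)) (int2 h)
        exact this
      have e1 : ∫ ω, g (j : ℕ) ω * h ω ∂P
          = ∫ ω, g (j : ℕ) ω * (P[(h : Ω → ℝ) | ℱ n]) ω ∂P := by
        rw [← integral_condExp (h𝔾le n) (f := fun ω => g (j : ℕ) ω * h ω)]
        exact integral_congr_ae hpull
      have e2 : ∫ ω, g (j : ℕ) ω * (P[(h : Ω → ℝ) | ℱ n]) ω ∂P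
          = ∫ ω, g (j : ℕ) ω * (a₀ + ∑ i : Fin n, a i * g (i : ℕ) ω) ∂P := by
        refine integral_congr_ae ?_
        filter_upwards [ha'] with ω hω
        rw [hω]
      have e3 : ∫ ω, g (j : ℕ) ω * (a₀ + ∑ i : Fin n, a i * g (i : ℕ) ω) ∂P = a j := by
        have hint' : ∀ i : Fin n, Integrable (fun ω => g (j : ℕ) ω * (a i * g (i : ℕ) ω)) P := by
          intro i
          have := (hmul (j : ℕ) (i : ℕ)).const_mul (a i)
          refine this.congr ?_
          filter_upwards [] with ω
          ring
        have : (fun ω => g (j : ℕ) ω * (a₀ + ∑ i : Fin n, a i * g (i : ℕ) ω))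
            = fun ω => a₀ * g (j : ℕ) ω + ∑ i : Fin n, g (j : ℕ) ω * (a i * g (i : ℕ) ω) := by
          funext ω
          rw [mul_add, Finset.mul_sum]
          ring_nf
        rw [this, integral_add ((int2 (g (j : ℕ))).const_mul _)
          (integrable_finset_sum _ fun i _ => hint' i),
          integral_const_mul, hgmean, mul_zero, zero_add,
          integral_finset_sum _ fun i _ => hint' i]
        have hterm : ∀ i : Fin n,
            ∫ ω, g (j : ℕ) ω * (a i * g (i : ℕ) ω) ∂P = a i * if (j : ℕ) = (i : ℕ) then 1 else 0 := by
          intro i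
          have : (fun ω => g (j : ℕ) ω * (a i * g (i : ℕ) ω))
              = fun ω => a i * (g (j : ℕ) ω * g (i : ℕ) ω) := by
            funext ω; ring
          rw [this, integral_const_mul, ← hinner_fun (g (j : ℕ)) (g (i : ℕ))]
          congr 1
          have := orthonormal_iff_ite.mp hg (j : ℕ) (i : ℕ)
          simpa using this
        rw [Finset.sum_congr rfl fun i _ => hterm i]
        have : ∀ i : Fin n, (if (j : ℕ) = (i : ℕ) then a i * 1 else a i * 0)
            = if j = i then a i else 0 := by
          intro i
          by_cases hji : j = i
          · simp [hji]
          · have : (j : ℕ) ≠ (i : ℕ) := fun hc => hji (Fin.ext hc)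
            simp [hji, this]
        simp_rw [mul_ite, this]
        simp
      have e4 : b (j : ℕ) = ∫ ω, g (j : ℕ) ω * h ω ∂P := hinner_fun (g (j : ℕ)) h
      rw [e4, e1, e2, e3]
    refine ha'.trans (Eventually.of_forall fun ω => ?_)
    simp only [ha₀, zero_add]
    rw [← Fin.sum_univ_eq_sum_range (fun i => b i * g i ω) n]
    exact Finset.sum_congr rfl fun i _ => by rw [haj i]
  -- the partial sums and their limit
  set S : ℕ → Lp ℝ 2 P := fun n => ∑ i ∈ Finset.range n, b i • g i with hSdef
  have coeS : ∀ n, ⇑(S n) =ᵐ[P] fun ω => ∑ i ∈ Finset.range n, b i * g i ω := by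
    intro n
    refine (Lp_coeFn_sum_range (fun i => b i • g i) n).trans ?_
    have : ∀ i : ℕ, ⇑(b i • g i) =ᵐ[P] fun ω => b i * g i ω := by
      intro i
      filter_upwards [Lp.coeFn_smul (b i) (g i)] with ω hω
      simpa using hω
    have hall : ∀ᵐ ω ∂P, ∀ i, (b i • g i) ω = b i * g i ω := ae_all_iff.2 this
    filter_upwards [hall] with ω hω
    exact Finset.sum_congr rfl fun i _ => hω i
  have hb2 : Summable fun i => ‖b i‖ ^ 2 := hg.inner_products_summable h
  have hsum : Summable fun i => b i • g i := by
    have := (hg.orthogonalFamily.summable_iff_norm_sq_summable b).2 hb2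
    simpa [LinearIsometry.toSpanSingleton_apply] using this
  set q : Lp ℝ 2 P := ∑' i, b i • g i with hqdef
  have hqt : Tendsto S atTop (𝓝 q) := hsum.hasSum.tendsto_sum_nat
  have hSG : ∀ n, S n ∈ G := fun n =>
    Submodule.sum_mem _ fun i _ => Submodule.smul_mem _ _ (hgG i)
  have hqG : q ∈ G := hGclosed.mem_of_tendsto hqt (Eventually.of_forall hSG)
  have hqi : ∀ i, (inner ℝ q (g i) : ℝ) = b i := by
    intro i
    have ht : Tendsto (fun n => (inner ℝ (S n) (g i) : ℝ)) atTop (𝓝 (inner ℝ q (g i))) :=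
      Tendsto.inner hqt tendsto_const_nhds
    have heq : ∀ n, i < n → (inner ℝ (S n) (g i) : ℝ) = b i := by
      intro n hn
      rw [hSdef]
      simp only
      rw [sum_inner]
      have : ∀ j ∈ Finset.range n, (inner ℝ (b j • g j) (g i) : ℝ)
          = if j = i then b j else 0 := by
        intro j _
        rw [real_inner_smul_left]
        rw [orthonormal_iff_ite.mp hg j i]
        by_cases hji : j = i <;> simp [hji]
      rw [Finset.sum_congr rfl this, Finset.sum_ite_eq' (Finset.range n) i]
      simp [Finset.mem_range.mpr hn]
    have ht' : Tendsto (fun _ : ℕ => b i) atTop (𝓝 (inner ℝ q (g i))) := by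
      refine ht.congr' ?_
      filter_upwards [eventually_gt_atTop i] with n hn
      exact heq n hn
    exact tendsto_nhds_unique ht' tendsto_const_nhds
  have horth : ∀ g' ∈ G, (inner ℝ (h - q) g' : ℝ) = 0 := by
    have hker : G ≤ (innerSL ℝ (h - q)).ker := by
      rw [hspan]
      refine Submodule.topologicalClosure_minimal (Submodule.span ℝ (Set.range g)) ?_
        (ContinuousLinearMap.isClosed_ker (innerSL ℝ (h - q)))
      rw [Submodule.span_le]
      rintro x ⟨i, rfl⟩
      have hthis : (inner ℝ (h - q) (g i) : ℝ) = 0 := by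
        rw [inner_sub_left, hqi i]
        have hb' : (inner ℝ h (g i) : ℝ) = b i := by
          simp only [hbdef]
          exact real_inner_comm (g i) h
        rw [hb', sub_self]
      exact SetLike.mem_coe.mpr (LinearMap.mem_ker.mpr hthis)
    intro g' hg'
    have h6 := hker hg'
    rw [LinearMap.mem_ker] at h6
    exact h6
  refine ⟨q, hqG, horth, ?_⟩
  -- conclude via Lévy's upward theorem and a.e. convergent subsequence
  have hlevy : ∀ᵐ ω ∂P, Tendsto (fun n => (P[(h : Ω → ℝ) | ℱ n]) ω) atTop
      (𝓝 ((P[(h : Ω → ℝ) | ⨆ n, ℱ n]) ω)) := tendsto_ae_condExp _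
  have htim : TendstoInMeasure P (fun n => ⇑(S n)) atTop ⇑q :=
    tendstoInMeasure_of_tendsto_Lp hqt
  obtain ⟨φ, hφmono, hφae⟩ := htim.exists_seq_tendsto_ae
  have hkeyall : ∀ᵐ ω ∂P, ∀ n, (P[(h : Ω → ℝ) | ℱ n]) ω = S n ω :=
    ae_all_iff.2 fun n => (key n).trans (coeS n).symm
  filter_upwards [hlevy, hφae, hkeyall] with ω h1 h2 h3
  have h4 : Tendsto (fun k => (P[(h : Ω → ℝ) | ℱ (φ k)]) ω) atTop
      (𝓝 ((P[(h : Ω → ℝ) | ⨆ n, ℱ n]) ω)) := h1.comp hφmono.tendsto_atTop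
  have h5 : Tendsto (fun k => (P[(h : Ω → ℝ) | ℱ (φ k)]) ω) atTop (𝓝 (q ω)) := by
    refine h2.congr fun k => ?_
    exact (h3 (φ k)).symm
  exact tendsto_nhds_unique h4 h5
end
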